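/- If S ~ Gamma(m,1) with integer m ≥ 1 is independent of a nonnegative random variable I, then the ergodic rate satisfies E[ln(1 + S/(I+c))] = ∫₀^∞ (1/z)·(1 − (1+z)^{-m})·e^{-cz}·E[e^{-zI}] dz for any constant c ≥ 0. -/

import Mathlib

open MeasureTheory ProbabilityTheory Real
open Set

lemma myIntegral_exp_neg_mul_Ioi {u : ℝ} (hu : 0 < u) :
    ∫ z in Set.Ioi (0:ℝ), Real.exp (-(u * z)) = 1 / u := by
  have h := integral_rpow_mul_exp_neg_mul_Ioi zero_lt_one hu
  simpa [Real.Gamma_one] using h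

lemma myExpDecay_integrableOn {u : ℝ} (hu : 0 < u) :
    IntegrableOn (fun z : ℝ => Real.exp (-(u * z))) (Set.Ioi 0) := by
  simpa [neg_mul] using exp_neg_integrableOn_Ioi 0 hu

lemma inner_exp_integral {t s z : ℝ} (hz : 0 < z) (hst : t ≤ s + t) :
    ∫ u in Set.Icc t (s+t), Real.exp (-(u * z)) =
      (Real.exp (-(t*z)) - Real.exp (-((s+t)*z)))/z := by
  rw [MeasureTheory.integral_Icc_eq_integral_Ioc,
    ← intervalIntegral.integral_of_le hst]
  have : ∀ u : ℝ, Real.exp (-(u*z)) = (fun x => Real.exp (-x)) (z * u) := by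
    intro u; simp [mul_comm]
  simp_rw [this]
  rw [intervalIntegral.integral_comp_mul_left (fun x => Real.exp (-x)) hz.ne']
  rw [intervalIntegral.integral_comp_neg]
  rw [integral_exp]
  field_simp
  rw [smul_eq_mul, ← mul_assoc, mul_one_div_cancel hz.ne', one_mul]

lemma frullani_lintegral {t s : ℝ} (ht : 0 < t) (hs : 0 ≤ s) :
    ∫⁻ z in Set.Ioi (0:ℝ),
        ENNReal.ofReal ((Real.exp (-(t*z)) - Real.exp (-((s+t)*z)))/z)
      = ENNReal.ofReal (Real.log (1 + s/t)) := by
  have hst : t ≤ s + t := le_add_of_nonneg_left hs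
  -- step 1: rewrite integrand as a lintegral over u
  have step1 : ∀ z ∈ Set.Ioi (0:ℝ),
      ENNReal.ofReal ((Real.exp (-(t*z)) - Real.exp (-((s+t)*z)))/z)
        = ∫⁻ u in Set.Icc t (s+t), ENNReal.ofReal (Real.exp (-(u*z))) := by
    intro z hz
    rw [← inner_exp_integral hz hst]
    exact ofReal_integral_eq_lintegral_ofReal
      ((Continuous.integrableOn_Icc (by continuity)))
      (ae_of_all _ fun u => (Real.exp_pos _).le)
  rw [setLIntegral_congr_fun measurableSet_Ioi step1]
  -- step 2: swap
  rw [lintegral_lintegral_swap]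
  · -- step 3: inner integral over z
    have step3 : ∀ u ∈ Set.Icc t (s+t),
        ∫⁻ z in Set.Ioi (0:ℝ), ENNReal.ofReal (Real.exp (-(u*z)))
          = ENNReal.ofReal (1/u) := by
      intro u hu
      have hu0 : 0 < u := lt_of_lt_of_le ht hu.1
      rw [← myIntegral_exp_neg_mul_Ioi hu0]
      exact (ofReal_integral_eq_lintegral_ofReal (myExpDecay_integrableOn hu0)
        (ae_of_all _ fun z => (Real.exp_pos _).le)).symm
    rw [setLIntegral_congr_fun measurableSet_Icc step3]
    rw [← ofReal_integral_eq_lintegral_ofReal]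
    · congr 1
      rw [MeasureTheory.integral_Icc_eq_integral_Ioc, ← intervalIntegral.integral_of_le hst,
        integral_one_div (by
          intro h
          rcases Set.mem_uIcc.1 h with ⟨h1, _⟩ | ⟨_, h2⟩ <;> linarith)]
      congr 1
      field_simp
      ring
    · exact (ContinuousOn.integrableOn_compact isCompact_Icc
        (continuousOn_of_forall_continuousAt (fun u hu => by
          exact (continuousAt_const.div continuousAt_id
            (by exact (lt_of_lt_of_le ht hu.1).ne')))))
    · filter_upwards [self_mem_ae_restrict measurableSet_Icc] with u hu
      have := lt_of_lt_of_le ht hu.1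
      positivity
  · exact (Measurable.ennreal_ofReal (by measurability)).aemeasurable

lemma gamma_laplace {m : ℕ} (hm : 1 ≤ m) {z : ℝ} (hz : 0 ≤ z) :
    ∫ x, Real.exp (-(x*z)) ∂(gammaMeasure m 1) = (1+z) ^ (-(m:ℝ)) := by
  have hm' : (0:ℝ) < m := by exact_mod_cast hm
  have h1z : (0:ℝ) < 1 + z := by linarith
  have hmeas : Measurable fun x : ℝ => Real.exp (-(x*z)) := by measurability
  rw [integral_eq_lintegral_of_nonneg_ae (ae_of_all _ fun x => (Real.exp_pos _).le)
    hmeas.aestronglyMeasurable]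
  have hpdfmeas : Measurable (gammaPDF (m:ℝ) 1) :=
    (measurable_gammaPDFReal (m:ℝ) 1).ennreal_ofReal
  rw [gammaMeasure, lintegral_withDensity_eq_lintegral_mul _ hpdfmeas hmeas.ennreal_ofReal]
  have hsplit : ∫⁻ x, (gammaPDF m 1 * fun x => ENNReal.ofReal (Real.exp (-(x*z)))) x
      = ∫⁻ x in Set.Ici 0, gammaPDF m 1 x * ENNReal.ofReal (Real.exp (-(x*z))) := by
    rw [← lintegral_add_compl _ measurableSet_Ici (μ := volume)]
    have : ∫⁻ x in (Set.Ici (0:ℝ))ᶜ,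
        (gammaPDF m 1 * fun x => ENNReal.ofReal (Real.exp (-(x*z)))) x = 0 := by
      rw [Set.compl_Ici]
      rw [setLIntegral_congr_fun (g := fun _ => 0) measurableSet_Iio
        (by intro x hx
            simp [gammaPDF_of_neg (show x < 0 from hx)])]
      simp
    rw [this, add_zero]
    simp only [Pi.mul_apply]
  rw [hsplit]
  have heq : ∀ x ∈ Set.Ici (0:ℝ), gammaPDF m 1 x * ENNReal.ofReal (Real.exp (-(x*z)))
      = ENNReal.ofReal (gammaPDFReal m 1 x * Real.exp (-(x*z))) := by
    intro x hx
    rw [gammaPDF, ENNReal.ofReal_mul (gammaPDFReal_nonneg hm' one_pos x)]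
  rw [setLIntegral_congr_fun measurableSet_Ici heq]
  rw [← integral_eq_lintegral_of_nonneg_ae]
  · rw [MeasureTheory.integral_Ici_eq_integral_Ioi]
    have heq2 : ∀ x ∈ Set.Ioi (0:ℝ), gammaPDFReal m 1 x * Real.exp (-(x*z))
        = (1 / Real.Gamma m) * (x ^ ((m:ℝ) - 1) * Real.exp (-((1+z)*x))) := by
      intro x hx
      rw [gammaPDFReal, if_pos (le_of_lt hx)]
      rw [Real.one_rpow, mul_assoc, ← Real.exp_add]
      ring_nf
    rw [setIntegral_congr_fun measurableSet_Ioi heq2, MeasureTheory.integral_const_mul,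
      integral_rpow_mul_exp_neg_mul_Ioi hm' h1z]
    have hpow : ((1:ℝ)/(1+z)) ^ (m:ℝ) = (1+z) ^ (-(m:ℝ)) := by
      rw [one_div, ← Real.rpow_neg_one, ← Real.rpow_mul h1z.le]
      norm_num
    rw [hpow]
    field_simp [Real.Gamma_pos_of_pos hm'|>.ne']
  · refine (ae_restrict_iff' measurableSet_Ici).2 (ae_of_all _ fun x hx => ?_)
    exact mul_nonneg (gammaPDFReal_nonneg hm' one_pos x) (Real.exp_pos _).le
  · exact ((measurable_gammaPDFReal m 1).mul hmeas).aestronglyMeasurable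

/-- Ergodic rate with a `Gamma(m,1)` signal power `S` independent of the
interference `I` and noise `c ≥ 0`:
`E[ln(1 + S/(I+c))] = ∫₀^∞ (1/z)(1 − (1+z)^{-m}) e^{-cz} E[e^{-zI}] dz`. -/
theorem ergodic_rate_gamma_signal
    {Ω : Type*} [MeasureSpace Ω] [IsProbabilityMeasure (ℙ : Measure Ω)]
    (S I : Ω → ℝ) (hSmeas : Measurable S) (hImeas : Measurable I)
    (m : ℕ) (hm : 1 ≤ m)
    (hS : Measure.map S ℙ = gammaMeasure m 1)
    (hindep : IndepFun S I ℙ)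
    (hIpos : ∀ ω, 0 ≤ I ω)
    (c : ℝ) (hc : 0 ≤ c)
    (hden : ∀ ω, 0 < I ω + c) :
    ∫ ω, Real.log (1 + S ω / (I ω + c)) ∂ℙ =
      ∫ z in Set.Ioi (0 : ℝ),
        (1 / z) * (1 - (1 + z) ^ (-(m : ℝ))) * Real.exp (-c * z) *
          ∫ ω, Real.exp (-z * I ω) ∂ℙ := by
  -- a.e. nonnegativity of S
  have hS0 : ∀ᵐ ω ∂ℙ, 0 ≤ S ω := by
    rw [ae_iff]
    have hset : {ω | ¬ 0 ≤ S ω} = S ⁻¹' (Set.Iio 0) := by ext ω; simp [not_le]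
    rw [hset, ← Measure.map_apply hSmeas measurableSet_Iio, hS, gammaMeasure,
      withDensity_apply _ measurableSet_Iio]
    exact lintegral_gammaPDF_of_nonpos le_rfl
  -- LHS as a lintegral
  have hlog_meas : Measurable fun ω => Real.log (1 + S ω / (I ω + c)) :=
    (measurable_const.add (hSmeas.div ((hImeas.add_const c)))).log
  have hlogpos : ∀ᵐ ω ∂ℙ, 0 ≤ Real.log (1 + S ω / (I ω + c)) := by
    filter_upwards [hS0] with ω hω
    apply Real.log_nonneg
    have h1 : 0 ≤ S ω / (I ω + c) := div_nonneg hω (hden ω).le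
    linarith
  rw [integral_eq_lintegral_of_nonneg_ae hlogpos hlog_meas.aestronglyMeasurable]
  -- pointwise Frullani
  have key : ∀ᵐ ω ∂ℙ, ENNReal.ofReal (Real.log (1 + S ω / (I ω + c)))
      = ∫⁻ z in Set.Ioi (0:ℝ), ENNReal.ofReal
          ((Real.exp (-((I ω + c)*z)) - Real.exp (-((S ω + (I ω + c))*z)))/z) := by
    filter_upwards [hS0] with ω hω
    exact (frullani_lintegral (hden ω) hω).symm
  rw [lintegral_congr_ae key]
  -- Tonelli swap
  have hm1 : Measurable (Function.uncurry fun (ω : Ω) (z : ℝ) => ENNReal.ofReal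
      ((Real.exp (-((I ω + c)*z)) - Real.exp (-((S ω + (I ω + c))*z)))/z)) := by
    apply Measurable.ennreal_ofReal
    apply Measurable.div _ measurable_snd
    exact ((((hImeas.comp measurable_fst).add_const c).mul measurable_snd).neg.exp).sub
      ((((hSmeas.comp measurable_fst).add
        ((hImeas.comp measurable_fst).add_const c)).mul measurable_snd).neg.exp)
  rw [lintegral_lintegral_swap hm1.aemeasurable]
  -- inner expectation computation
  have inner : ∀ z ∈ Set.Ioi (0:ℝ),
      (∫⁻ ω, ENNReal.ofReal
          ((Real.exp (-((I ω + c)*z)) - Real.exp (-((S ω + (I ω + c))*z)))/z) ∂ℙ)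
        = ENNReal.ofReal ((1 / z) * (1 - (1 + z) ^ (-(m : ℝ))) * Real.exp (-c * z) *
            ∫ ω, Real.exp (-z * I ω) ∂ℙ) := by
    intro z hz
    rw [Set.mem_Ioi] at hz
    -- integrability of the pieces
    have hf1meas : Measurable fun ω => Real.exp (-((I ω + c)*z)) :=
      (((hImeas.add_const c).mul_const z).neg).exp
    have hf2meas : Measurable fun ω => Real.exp (-((S ω + (I ω + c))*z)) :=
      (((hSmeas.add (hImeas.add_const c)).mul_const z).neg).exp
    have hf1int : Integrable (fun ω => Real.exp (-((I ω + c)*z))) ℙ := by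
      refine Integrable.mono' (integrable_const 1) hf1meas.aestronglyMeasurable ?_
      filter_upwards with ω
      rw [Real.norm_eq_abs, abs_of_pos (Real.exp_pos _)]
      exact Real.exp_le_one_iff.2 (by nlinarith [hden ω])
    have hf2int : Integrable (fun ω => Real.exp (-((S ω + (I ω + c))*z))) ℙ := by
      refine Integrable.mono' (integrable_const 1) hf2meas.aestronglyMeasurable ?_
      filter_upwards [hS0] with ω hω
      rw [Real.norm_eq_abs, abs_of_pos (Real.exp_pos _)]
      exact Real.exp_le_one_iff.2 (by nlinarith [hden ω])
    have hEIint : Integrable (fun ω => Real.exp (-z * I ω)) ℙ := by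
      refine Integrable.mono' (integrable_const 1)
        ((hImeas.const_mul (-z)).exp).aestronglyMeasurable ?_
      filter_upwards with ω
      rw [Real.norm_eq_abs, abs_of_pos (Real.exp_pos _)]
      exact Real.exp_le_one_iff.2 (by nlinarith [hIpos ω])
    have hint : Integrable (fun ω =>
        (Real.exp (-((I ω + c)*z)) - Real.exp (-((S ω + (I ω + c))*z)))/z) ℙ :=
      (hf1int.sub hf2int).div_const z
    rw [← ofReal_integral_eq_lintegral_ofReal hint ?nn]
    case nn =>
      filter_upwards [hS0] with ω hω
      have : Real.exp (-((S ω + (I ω + c))*z)) ≤ Real.exp (-((I ω + c)*z)) :=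
        Real.exp_le_exp.2 (by nlinarith)
      exact div_nonneg (sub_nonneg.2 this) hz.le
    congr 1
    -- compute the Bochner integral
    have hEf1 : ∫ ω, Real.exp (-((I ω + c)*z)) ∂ℙ
        = Real.exp (-c*z) * ∫ ω, Real.exp (-z * I ω) ∂ℙ := by
      have : ∀ ω, Real.exp (-((I ω + c)*z))
          = Real.exp (-c*z) * Real.exp (-z * I ω) := by
        intro ω; rw [← Real.exp_add]; ring_nf
      simp_rw [this]
      exact integral_const_mul _ _
    have hEX : ∫ ω, Real.exp (-(S ω * z)) ∂ℙ = (1+z) ^ (-(m:ℝ)) := by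
      have hmexp : Measurable fun x : ℝ => Real.exp (-(x*z)) := by measurability
      calc ∫ ω, Real.exp (-(S ω * z)) ∂ℙ
          = ∫ x, Real.exp (-(x*z)) ∂(Measure.map S ℙ) :=
            (integral_map hSmeas.aemeasurable hmexp.aestronglyMeasurable).symm
        _ = (1+z) ^ (-(m:ℝ)) := by rw [hS]; exact gamma_laplace hm hz.le
    have hXint : Integrable (fun ω => Real.exp (-(S ω * z))) ℙ := by
      refine Integrable.mono' (integrable_const 1)
        ((hSmeas.mul_const z).neg.exp).aestronglyMeasurable ?_
      filter_upwards [hS0] with ω hω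
      rw [Real.norm_eq_abs, abs_of_pos (Real.exp_pos _)]
      exact Real.exp_le_one_iff.2 (by nlinarith)
    have hEf2 : ∫ ω, Real.exp (-((S ω + (I ω + c))*z)) ∂ℙ
        = (1+z) ^ (-(m:ℝ)) * (Real.exp (-c*z) * ∫ ω, Real.exp (-z * I ω) ∂ℙ) := by
      have hsplit : ∀ ω, Real.exp (-((S ω + (I ω + c))*z))
          = Real.exp (-(S ω * z)) * Real.exp (-((I ω + c)*z)) := by
        intro ω; rw [← Real.exp_add]; ring_nf
      simp_rw [hsplit]
      have hXY : IndepFun (fun ω => Real.exp (-(S ω * z)))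
          (fun ω => Real.exp (-((I ω + c)*z))) ℙ := by
        exact hindep.comp (φ := fun x => Real.exp (-(x*z)))
          (ψ := fun x => Real.exp (-((x+c)*z))) (by measurability) (by measurability)
      have hmul := hXY.integral_mul_eq_mul_integral hXint.aestronglyMeasurable hf1int.aestronglyMeasurable
      exact hmul.trans (by rw [hEX, hEf1])
    rw [integral_div, integral_sub hf1int hf2int, hEf1, hEf2]
    ring
  rw [setLIntegral_congr_fun measurableSet_Ioi inner]
  -- convert RHS
  have hEImeas : StronglyMeasurable fun z : ℝ => ∫ ω, Real.exp (-z * I ω) ∂ℙ := by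
    exact MeasureTheory.StronglyMeasurable.integral_prod_right'
      (f := fun p : ℝ × Ω => Real.exp (-p.1 * I p.2))
      ((measurable_fst.neg.mul (hImeas.comp measurable_snd)).exp).stronglyMeasurable
  have hg_meas : AEStronglyMeasurable (fun z : ℝ =>
      (1 / z) * (1 - (1 + z) ^ (-(m : ℝ))) * Real.exp (-c * z) *
        ∫ ω, Real.exp (-z * I ω) ∂ℙ) (volume.restrict (Set.Ioi 0)) := by
    refine AEStronglyMeasurable.mul ?_ hEImeas.aestronglyMeasurable.restrict
    have hcont : ContinuousOn (fun z : ℝ =>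
        (1 / z) * (1 - (1 + z) ^ (-(m : ℝ))) * Real.exp (-c * z)) (Set.Ioi 0) := by
      intro z hz
      rw [Set.mem_Ioi] at hz
      apply ContinuousAt.continuousWithinAt
      have hrpow : ContinuousAt (fun z : ℝ => (1 + z) ^ (-(m : ℝ))) z := by
        exact (Real.continuousAt_rpow_const (1 + z) (-(m:ℝ))
          (Or.inl (by positivity))).comp ((continuous_const.add continuous_id).continuousAt)
      exact (((continuousAt_const.div continuousAt_id hz.ne').mul
        (continuousAt_const.sub hrpow)).mul
        ((Real.continuous_exp.comp (continuous_const.mul continuous_id)).continuousAt))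
    exact hcont.aestronglyMeasurable measurableSet_Ioi
  have hg_nonneg : 0 ≤ᵐ[volume.restrict (Set.Ioi (0:ℝ))] fun z : ℝ =>
      (1 / z) * (1 - (1 + z) ^ (-(m : ℝ))) * Real.exp (-c * z) *
        ∫ ω, Real.exp (-z * I ω) ∂ℙ := by
    filter_upwards [self_mem_ae_restrict measurableSet_Ioi] with z hz
    rw [Set.mem_Ioi] at hz
    have h1 : (1+z) ^ (-(m:ℝ)) ≤ 1 :=
      Real.rpow_le_one_of_one_le_of_nonpos (by linarith) (neg_nonpos.2 (Nat.cast_nonneg m))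
    have h2 : (0:ℝ) ≤ ∫ ω, Real.exp (-z * I ω) ∂ℙ :=
      integral_nonneg fun ω => (Real.exp_pos _).le
    have h3 : (0:ℝ) ≤ 1/z := by positivity
    have h4 : (0:ℝ) ≤ Real.exp (-c*z) := (Real.exp_pos _).le
    have h5 : (0:ℝ) ≤ 1 - (1+z) ^ (-(m:ℝ)) := by linarith
    show (0:ℝ) ≤ _
    exact mul_nonneg (mul_nonneg (mul_nonneg h3 h5) h4) h2
  rw [integral_eq_lintegral_of_nonneg_ae hg_nonneg hg_meas]
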